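/- Every finite connected graph G with at least one edge admits a strong trace, i.e., a double trace having no nontrivial N-repetition at any vertex. -/

import Mathlib

namespace StrongTraces

open SimpleGraph Finset

/-- Cyclic successor on `Fin n`. -/
def csucc {n : ℕ} (i : Fin n) : Fin n :=
  ⟨(i.val + 1) % n, Nat.mod_lt _ (by have := i.isLt; omega)⟩

/-- Cyclic predecessor on `Fin n`. -/
def cpred {n : ℕ} (i : Fin n) : Fin n :=
  ⟨(i.val + n - 1) % n, Nat.mod_lt _ (by have := i.isLt; omega)⟩

variable {V : Type*} [Fintype V] [DecidableEq V]

/-- A double trace of `G`: a closed walk, encoded as a cyclic sequence of `n` vertices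
(read cyclically, so step `i` goes from `f i` to `f (csucc i)`), that traverses every
edge of `G` exactly twice.  (`n = 0` encodes the trivial closed walk.) -/
structure DoubleTrace (G : SimpleGraph V) where
  n : ℕ
  f : Fin n → V
  adj : ∀ i : Fin n, G.Adj (f i) (f (csucc i))
  twice : ∀ e ∈ G.edgeSet,
    (Finset.univ.filter fun i : Fin n => s(f i, f (csucc i)) = e).card = 2

variable {G : SimpleGraph V}

/-- `W` has an `N`-repetition at `v`: at every visit of `W` to `v`, the predecessor
lies in `N` if and only if the successor lies in `N`. -/
def DoubleTrace.HasRepetition (W : DoubleTrace G) (v : V) (N : Set V) : Prop :=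
  ∀ i : Fin W.n, W.f i = v → (W.f (cpred i) ∈ N ↔ W.f (csucc i) ∈ N)

/-- A strong trace: a double trace all of whose repetitions are trivial
(`N = ∅` or `N = N(v)`). -/
def DoubleTrace.IsStrong (W : DoubleTrace G) : Prop :=
  ∀ (v : V) (N : Set V), N ⊆ G.neighborSet v → W.HasRepetition v N →
    N = ∅ ∨ N = G.neighborSet v

/-- A `d`-stable trace: a double trace with no `N`-repetition with `1 ≤ |N| ≤ d`
at any vertex. -/
def DoubleTrace.IsStable (W : DoubleTrace G) (d : ℕ) : Prop :=
  ∀ (v : V) (N : Set V), N ⊆ G.neighborSet v → 1 ≤ N.ncard → N.ncard ≤ d →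
    ¬ W.HasRepetition v N

/-- The number of times `W` makes the directed step from `u` to `v`. -/
def DoubleTrace.traversalCount (W : DoubleTrace G) (u v : V) : ℕ :=
  (Finset.univ.filter fun i : Fin W.n => W.f i = u ∧ W.f (csucc i) = v).card

/-- `W` traverses every edge once in each direction. -/
def DoubleTrace.IsAntiparallel (W : DoubleTrace G) : Prop :=
  ∀ u v : V, G.Adj u v → W.traversalCount u v = 1

/-- `W` traverses every edge twice in the same direction. -/
def DoubleTrace.IsParallel (W : DoubleTrace G) : Prop :=
  ∀ u v : V, G.Adj u v → W.traversalCount u v = 0 ∨ W.traversalCount u v = 2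

/-- The adjacency relation of the vertex figure of `v` with respect to `W`:
two edges incident with `v` are related if they occur consecutively at some visit
of `W` to `v`. -/
def DoubleTrace.VertexFigureRel (W : DoubleTrace G) (v : V) :
    G.incidenceSet v → G.incidenceSet v → Prop :=
  fun e e' => ∃ i : Fin W.n, W.f i = v ∧
    ((e.1 = s(W.f (cpred i), v) ∧ e'.1 = s(v, W.f (csucc i))) ∨
     (e'.1 = s(W.f (cpred i), v) ∧ e.1 = s(v, W.f (csucc i))))

/-- The vertex figure of `v` with respect to `W` is connected: the equivalence
relation generated by consecutiveness at visits to `v` relates any two edges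
incident with `v`. -/
def DoubleTrace.VertexFigureConnected (W : DoubleTrace G) (v : V) : Prop :=
  ∀ e e' : G.incidenceSet v, Relation.EqvGen (W.VertexFigureRel v) e e'

/-- The number of connected components of the vertex figure of `v` with respect to
`W`, i.e. the number of equivalence classes of the equivalence relation generated by
consecutiveness at visits to `v`. -/
noncomputable def DoubleTrace.vertexFigureComponents (W : DoubleTrace G) (v : V) : ℕ :=
  Nat.card (Quot (W.VertexFigureRel v))

/-- The number of edges of `H` lying in the connected component `c` of `H`. -/
noncomputable def componentEdgeCount (H : SimpleGraph V) (c : H.ConnectedComponent) : ℕ :=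
  Nat.card {e : Sym2 V | e ∈ H.edgeSet ∧ ∀ x ∈ e, H.connectedComponentMk x = c}

lemma val_csucc {n : ℕ} (k : Fin n) :
    (csucc k).val = if k.val + 1 = n then 0 else k.val + 1 := by
  have hk := k.isLt
  simp only [csucc]
  split_ifs with h
  · simp [h]
  · exact Nat.mod_eq_of_lt (by omega)
lemma val_cpred {n : ℕ} (k : Fin n) :
    (cpred k).val = if k.val = 0 then n - 1 else k.val - 1 := by
  have hk := k.isLt
  simp only [cpred]
  split_ifs with h
  · rw [h]
    simp only [Nat.zero_add]
    exact Nat.mod_eq_of_lt (by omega)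
  · have h2 : k.val + n - 1 = (k.val - 1) + n := by omega
    rw [h2, Nat.add_mod_right]
    exact Nat.mod_eq_of_lt (by omega)
lemma cpred_csucc {n : ℕ} (k : Fin n) : cpred (csucc k) = k := by
  have hk := k.isLt
  apply Fin.ext
  rw [val_cpred, val_csucc]
  split_ifs <;> first | contradiction | omega
lemma csucc_cpred {n : ℕ} (k : Fin n) : csucc (cpred k) = k := by
  have hk := k.isLt
  apply Fin.ext
  rw [val_csucc, val_cpred]
  split_ifs <;> first | contradiction | omega
lemma count_eq_card_filter {α : Type*} [DecidableEq α] (l : List α) (e : α) :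
    (Finset.univ.filter fun i : Fin l.length => l[(i : ℕ)] = e).card = l.count e := by
  induction l with
  | nil => simp
  | cons a l ih =>
    rw [Finset.card_filter]
    rw [show (∑ i : Fin (a :: l).length, if (a :: l)[(i:ℕ)] = e then 1 else 0)
        = (∑ i : Fin (l.length + 1), if (a :: l)[(i:ℕ)] = e then 1 else 0) from rfl,
      Fin.sum_univ_succ]
    simp only [Fin.val_zero, List.getElem_cons_zero, Fin.val_succ, List.getElem_cons_succ]
    rw [← Finset.card_filter, ih, List.count_cons]
    by_cases h : a = e <;> simp [h, beq_iff_eq, add_comm] <;> omega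
lemma edges_getElem {V : Type*} {G : SimpleGraph V} :
    ∀ {x y : V} (p : G.Walk x y) (k : ℕ), k < p.length →
      ∀ (hk : k < p.edges.length), p.edges[k] = s(p.getVert k, p.getVert (k + 1))
  | x, y, .cons h q, 0, hl, hk => by
      simp [SimpleGraph.Walk.edges_cons, SimpleGraph.Walk.getVert_zero,
        SimpleGraph.Walk.getVert_cons_succ]
  | x, y, .cons h q, (k+1), hl, hk => by
      simp only [SimpleGraph.Walk.edges_cons, List.getElem_cons_succ,
        SimpleGraph.Walk.getVert_cons_succ]
      exact edges_getElem q k (by simpa using hl) _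

section Aux
variable {V : Type*} [Fintype V] [DecidableEq V]


lemma reach_or_reach {G : SimpleGraph V} {r u : V} :
    ∀ {x y : V} (_ : G.Walk x y),
      ((G.deleteEdges {s(r,u)}).Reachable r x ∨ (G.deleteEdges {s(r,u)}).Reachable u x) →
      ((G.deleteEdges {s(r,u)}).Reachable r y ∨ (G.deleteEdges {s(r,u)}).Reachable u y)
  | x, _, .nil, hx => hx
  | x, y, .cons (v := z) hadj p, hx => by
    refine reach_or_reach p ?_
    by_cases he : s(x, z) = s(r, u)
    · rw [Sym2.eq_iff] at he
      rcases he with ⟨hxr, hzu⟩ | ⟨hxu, hzr⟩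
      · exact Or.inr (hzu ▸ Reachable.refl _)
      · exact Or.inl (hzr ▸ Reachable.refl _)
    · have hadj' : (G.deleteEdges {s(r,u)}).Adj x z := by
        rw [SimpleGraph.deleteEdges_adj]
        exact ⟨hadj, by simpa using he⟩
      rcases hx with h | h
      · exact Or.inl (h.trans hadj'.reachable)
      · exact Or.inr (h.trans hadj'.reachable)

lemma reach_to_side {G : SimpleGraph V} {r u x : V} (h : G.Reachable r x) :
    (G.deleteEdges {s(r,u)}).Reachable r x ∨ (G.deleteEdges {s(r,u)}).Reachable u x := by
  obtain ⟨p⟩ := h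
  exact reach_or_reach p (Or.inl (Reachable.refl _))

lemma exists_neighbor_of_reachable {G : SimpleGraph V} {r x : V} (h : G.Reachable r x)
    (hx : x ≠ r) : ∃ u, G.Adj r u := by
  obtain ⟨p⟩ := h
  cases p with
  | nil => exact absurd rfl hx.symm
  | cons h p => exact ⟨_, h⟩

open scoped Classical in
theorem exists_doubleWalk (G : SimpleGraph V) (r : V) :
    ∃ W : G.Walk r r, ∀ e : Sym2 V,
      W.edges.count e = if e ∈ G.edgeSet ∧ (∃ x ∈ e, G.Reachable r x) then 2 else 0 := by
  classical
  suffices H : ∀ (m : ℕ) (G : SimpleGraph V) (r : V), G.edgeSet.ncard ≤ m →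
      ∃ W : G.Walk r r, ∀ e : Sym2 V,
        W.edges.count e = if e ∈ G.edgeSet ∧ (∃ x ∈ e, G.Reachable r x) then 2 else 0 by
    exact H G.edgeSet.ncard G r le_rfl
  intro m
  induction m with
  | zero =>
    intro G r hle
    have hempty : G.edgeSet = ∅ := by
      have := G.edgeSet.toFinite
      rw [← Set.ncard_eq_zero this]
      omega
    refine ⟨Walk.nil, fun e => ?_⟩
    rw [if_neg]
    · simp
    · rintro ⟨he, -⟩
      rw [hempty] at he
      exact he
  | succ m ih =>
    intro G r hle
    by_cases hr : ∃ u, G.Adj r u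
    · obtain ⟨u, hru⟩ := hr
      set e0 : Sym2 V := s(r, u) with he0
      set G' : SimpleGraph V := G.deleteEdges {e0} with hG'
      have he0mem : e0 ∈ G.edgeSet := hru
      have hE' : G'.edgeSet = G.edgeSet \ {e0} := SimpleGraph.edgeSet_deleteEdges _
      have hlt : G'.edgeSet.ncard ≤ m := by
        have h1 : G'.edgeSet.ncard < G.edgeSet.ncard := by
          apply Set.ncard_lt_ncard ?_ G.edgeSet.toFinite
          rw [hE']
          refine Set.ssubset_iff_subset_ne.mpr ⟨Set.diff_subset, fun heq => ?_⟩
          have := heq ▸ he0mem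
          exact absurd this (by simp)
        omega
      have hle' : G' ≤ G := SimpleGraph.deleteEdges_le _
      have hmem' : ∀ e ∈ G'.edgeSet, e ∈ G.edgeSet := by
        intro e he; rw [hE'] at he; exact he.1
      have hmemE' : ∀ e, e ∈ G.edgeSet → e ≠ e0 → e ∈ G'.edgeSet := by
        intro e he hne; rw [hE']; exact ⟨he, by simpa using hne⟩
      obtain ⟨W1, hW1⟩ := ih G' r hlt
      by_cases hreach : G'.Reachable r u
      · -- single component case
        refine ⟨(W1.transfer G (fun e he => hmem' e (W1.edges_subset_edgeSet he))).append
          (Walk.cons hru (Walk.cons hru.symm Walk.nil)), fun e => ?_⟩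
        rw [Walk.edges_append, Walk.edges_transfer]
        simp only [Walk.edges_cons, Walk.edges_nil]
        rw [List.count_append]
        have hsy : s(u, r) = e0 := Sym2.eq_swap
        by_cases he : e = e0
        · subst he
          rw [hW1, if_neg, if_pos ⟨he0mem, r, he0 ▸ Sym2.mem_mk_left r u, Reachable.refl _⟩]
          · simp [hsy, ← he0]
          · rintro ⟨hmem, -⟩
            rw [hE'] at hmem
            simp at hmem
        · have hcnt0 : List.count e [e0, s(u,r)] = 0 := by
            simp [List.count_cons, hsy, Ne.symm he]
          rw [hcnt0, hW1, add_zero]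
          congr 1
          apply propext
          constructor
          · rintro ⟨hm, x, hx, hrx⟩
            exact ⟨hmem' e hm, x, hx, hrx.mono hle'⟩
          · rintro ⟨hm, x, hx, hrx⟩
            refine ⟨hmemE' e hm he, x, hx, ?_⟩
            rcases reach_to_side (u := u) hrx with h | h
            · exact h
            · exact hreach.trans h
      · -- two components case
        obtain ⟨W2, hW2⟩ := ih G' u hlt
        have hnru : ∀ x, ¬(G'.Reachable r x ∧ G'.Reachable u x) := by
          rintro x ⟨h1, h2⟩
          exact hreach (h1.trans h2.symm)
        refine ⟨(W1.transfer G (fun e he => hmem' e (W1.edges_subset_edgeSet he))).append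
          (Walk.cons hru (((W2.transfer G (fun e he => hmem' e (W2.edges_subset_edgeSet he))).append
            (Walk.cons hru.symm Walk.nil)))), fun e => ?_⟩
        rw [Walk.edges_append, Walk.edges_transfer]
        simp only [Walk.edges_cons, Walk.edges_append, Walk.edges_transfer, Walk.edges_nil,
          List.count_append, List.count_cons, List.count_nil, beq_iff_eq]
        have hsy : s(u, r) = e0 := Sym2.eq_swap
        by_cases he : e = e0
        · subst he
          have h1 : List.count e0 W1.edges = 0 := by
            rw [hW1, if_neg]; rintro ⟨hmem, -⟩; rw [hE'] at hmem; simp at hmem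
          have h2 : List.count e0 W2.edges = 0 := by
            rw [hW2, if_neg]; rintro ⟨hmem, -⟩; rw [hE'] at hmem; simp at hmem
          have hco : e0 ∈ G.edgeSet ∧ ∃ x ∈ e0, G.Reachable r x :=
            ⟨he0mem, r, he0 ▸ Sym2.mem_mk_left r u, Reachable.refl _⟩
          rw [h1, h2, if_pos hco, if_pos hsy, if_pos he0.symm]
        · have t1 : ¬ s(u, r) = e := fun h => he (h.symm.trans hsy)
          have t2 : ¬ s(r, u) = e := fun h => he (h.symm.trans he0.symm)
          rw [if_neg t1, if_neg t2, hW1, hW2]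
          by_cases hC : e ∈ G.edgeSet ∧ ∃ x ∈ e, G.Reachable r x
          · rw [if_pos hC]
            obtain ⟨hm, x, hx, hrx⟩ := hC
            have hmE' : e ∈ G'.edgeSet := hmemE' e hm he
            have hmut : ∀ y ∈ e, ∀ z ∈ e, G'.Reachable y z := by
              intro y hy z hz
              induction e using Sym2.ind with
              | _ a b =>
                have hab : G'.Adj a b := hmE'
                simp only [Sym2.mem_iff] at hy hz
                rcases hy with rfl | rfl <;> rcases hz with rfl | rfl
                · exact Reachable.refl _
                · exact hab.reachable
                · exact hab.symm.reachable
                · exact Reachable.refl _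
            rcases reach_to_side (u := u) hrx with h | h
            · have hn2 : ¬(e ∈ G'.edgeSet ∧ ∃ x ∈ e, G'.Reachable u x) := by
                rintro ⟨-, z, hz, huz⟩
                exact hnru z ⟨h.trans (hmut x hx z hz), huz⟩
              rw [if_pos ⟨hmE', x, hx, h⟩, if_neg hn2]
            · have hn1 : ¬(e ∈ G'.edgeSet ∧ ∃ x ∈ e, G'.Reachable r x) := by
                rintro ⟨-, z, hz, hrz⟩
                exact hnru z ⟨hrz, h.trans (hmut x hx z hz)⟩
              rw [if_neg hn1, if_pos ⟨hmE', x, hx, h⟩]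
          · have hn1 : ¬(e ∈ G'.edgeSet ∧ ∃ x ∈ e, G'.Reachable r x) := by
              rintro ⟨hm, y, hy, hry⟩
              exact hC ⟨hmem' e hm, y, hy, hry.mono hle'⟩
            have hn2 : ¬(e ∈ G'.edgeSet ∧ ∃ x ∈ e, G'.Reachable u x) := by
              rintro ⟨hm, y, hy, huy⟩
              exact hC ⟨hmem' e hm, y, hy, (hru.reachable.trans (huy.mono hle'))⟩
            rw [if_neg hC, if_neg hn1, if_neg hn2]
    · refine ⟨Walk.nil, fun e => ?_⟩
      rw [if_neg]
      · simp
      · rintro ⟨he, x, hx, hrx⟩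
        by_cases hxr : x = r
        · subst hxr
          induction e using Sym2.ind with
          | _ a b =>
            have hab : G.Adj a b := he
            simp only [Sym2.mem_iff] at hx
            rcases hx with rfl | rfl
            · exact hr ⟨b, hab⟩
            · exact hr ⟨a, hab.symm⟩
        · exact hr (exists_neighbor_of_reachable hrx hxr)

end Aux

section Convert
variable {V : Type*} [Fintype V] [DecidableEq V] {G : SimpleGraph V}

lemma exists_doubleTrace (G : SimpleGraph V) (hconn : G.Connected) :
    Nonempty (DoubleTrace G) := by
  classical
  obtain ⟨r⟩ : Nonempty V := hconn.nonempty
  obtain ⟨W, hW⟩ := exists_doubleWalk G r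
  have hcnt : ∀ e ∈ G.edgeSet, W.edges.count e = 2 := by
    intro e he
    rw [hW, if_pos]
    refine ⟨he, ?_⟩
    induction e using Sym2.ind with
    | _ a b => exact ⟨a, Sym2.mem_mk_left a b, hconn.preconnected r a⟩
  have hlen : W.edges.length = W.length := W.length_edges
  refine ⟨⟨W.length, fun i => W.getVert i.val, ?_, ?_⟩⟩
  · intro i
    show G.Adj (W.getVert i.val) (W.getVert (csucc i).val)
    have hi := i.isLt
    have hadj := W.adj_getVert_succ hi
    by_cases h : i.val + 1 = W.length
    · have : (csucc i).val = 0 := by rw [val_csucc, if_pos h]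
      rw [this]
      rw [Walk.getVert_zero]
      have : W.getVert (i.val + 1) = r := by rw [h, Walk.getVert_length]
      rwa [this] at hadj
    · have : (csucc i).val = i.val + 1 := by rw [val_csucc, if_neg h]
      rwa [this]
  · intro e he
    show (Finset.univ.filter fun i : Fin W.length =>
      s(W.getVert i.val, W.getVert (csucc i).val) = e).card = 2
    have key : ∀ i : Fin W.length,
        s(W.getVert i.val, W.getVert (csucc i).val) = W.edges[(i : ℕ)]'(by omega) := by
      intro i
      have hi := i.isLt
      rw [edges_getElem W i.val hi]
      by_cases h : i.val + 1 = W.length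
      · have h0 : (csucc i).val = 0 := by rw [val_csucc, if_pos h]
        rw [h0, Walk.getVert_zero]
        have : W.getVert (i.val + 1) = r := by rw [h, Walk.getVert_length]
        rw [this]
      · have h1 : (csucc i).val = i.val + 1 := by rw [val_csucc, if_neg h]
        rw [h1]
    have : (Finset.univ.filter fun i : Fin W.length =>
        s(W.getVert i.val, W.getVert (csucc i).val) = e)
        = (Finset.univ.filter fun i : Fin W.length => W.edges[(i : ℕ)]'(by omega) = e) := by
      apply Finset.filter_congr
      intro i _
      rw [key i]
    rw [this]
    have h2 : (Finset.univ.filter fun i : Fin W.edges.length => W.edges[(i:ℕ)] = e).card = 2 := by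
      rw [count_eq_card_filter W.edges e]
      exact hcnt e he
    refine Eq.trans ?_ h2
    apply Finset.card_bij' (fun i _ => Fin.cast hlen.symm i) (fun i _ => Fin.cast hlen i)
    · intro a ha
      simp only [Finset.mem_filter, Finset.mem_univ, true_and] at ha ⊢
      exact ha
    · intro a ha
      simp only [Finset.mem_filter, Finset.mem_univ, true_and] at ha ⊢
      exact ha
    · intro a _; rfl
    · intro a _; rfl

end Convert


section ParitySection
variable {V : Type*} [Fintype V] [DecidableEq V] {G : SimpleGraph V}


lemma step_pair_count (W : DoubleTrace G) {u v : V} (hadj : G.Adj v u) :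
    (univ.filter fun k : Fin W.n => W.f k = v ∧ W.f (csucc k) = u).card
      + (univ.filter fun k : Fin W.n => W.f k = u ∧ W.f (csucc k) = v).card = 2 := by
  classical
  have huv : u ≠ v := fun h => G.irrefl (h ▸ hadj)
  have h2 := W.twice s(v,u) hadj
  have hdis : Disjoint (univ.filter fun k : Fin W.n => W.f k = v ∧ W.f (csucc k) = u)
      (univ.filter fun k : Fin W.n => W.f k = u ∧ W.f (csucc k) = v) := by
    rw [Finset.disjoint_filter]
    rintro k _ ⟨h1, -⟩ ⟨h3, -⟩
    exact huv (h3 ▸ h1 ▸ rfl)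
  have hu : (univ.filter fun k : Fin W.n => s(W.f k, W.f (csucc k)) = s(v,u))
      = (univ.filter fun k : Fin W.n => W.f k = v ∧ W.f (csucc k) = u)
        ∪ (univ.filter fun k : Fin W.n => W.f k = u ∧ W.f (csucc k) = v) := by
    ext k
    simp only [Finset.mem_union, Finset.mem_filter, Finset.mem_univ, true_and, Sym2.eq_iff]
  rw [← h2, hu, Finset.card_union_of_disjoint hdis]

lemma step_pair_count_zero (W : DoubleTrace G) {u v : V} (hnadj : ¬ G.Adj v u) :
    (univ.filter fun k : Fin W.n => W.f k = v ∧ W.f (csucc k) = u) = ∅ := by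
  classical
  ext k
  simp only [Finset.mem_filter, Finset.mem_univ, true_and, Finset.notMem_empty, iff_false]
  rintro ⟨h1, h2⟩
  exact hnadj (h1 ▸ h2 ▸ W.adj k)

lemma parity (W : DoubleTrace G) (v : V) (S : Set V) (A : Finset (Fin W.n))
    (hA : ∀ k, k ∈ A ↔ (W.f k = v ∧ ¬(W.f (cpred k) ∈ S ↔ W.f (csucc k) ∈ S))) :
    Even A.card := by
  classical
  set P := univ.filter fun k : Fin W.n => W.f k = v ∧ W.f (cpred k) ∈ S with hP
  set Q := univ.filter fun k : Fin W.n => W.f k = v ∧ W.f (csucc k) ∈ S with hQ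
  set Q' := univ.filter fun k : Fin W.n => W.f (csucc k) = v ∧ W.f k ∈ S with hQ'
  set X := univ.filter fun k : Fin W.n =>
    W.f k = v ∧ W.f (cpred k) ∈ S ∧ W.f (csucc k) ∈ S with hX
  have hAeq : A = univ.filter fun k : Fin W.n =>
      W.f k = v ∧ ¬(W.f (cpred k) ∈ S ↔ W.f (csucc k) ∈ S) := by
    ext k
    simp only [Finset.mem_filter, Finset.mem_univ, true_and]
    exact hA k
  have key : A.card + 2 * X.card = P.card + Q.card := by
    rw [hAeq, hP, hQ, hX, Finset.card_filter, Finset.card_filter, Finset.card_filter,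
      Finset.card_filter, Finset.mul_sum, ← Finset.sum_add_distrib, ← Finset.sum_add_distrib]
    apply Finset.sum_congr rfl
    intro k _
    by_cases h1 : W.f k = v <;> by_cases h2 : W.f (cpred k) ∈ S <;>
      by_cases h3 : W.f (csucc k) ∈ S <;> simp [h1, h2, h3]
  have hPQ' : P.card = Q'.card := by
    apply Finset.card_bij' (fun k _ => cpred k) (fun k _ => csucc k)
    · intro k hk
      rw [hP, Finset.mem_filter] at hk
      rw [hQ', Finset.mem_filter]
      exact ⟨Finset.mem_univ _, by rw [csucc_cpred]; exact ⟨hk.2.1, hk.2.2⟩⟩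
    · intro k hk
      rw [hQ', Finset.mem_filter] at hk
      rw [hP, Finset.mem_filter]
      exact ⟨Finset.mem_univ _, by rw [cpred_csucc]; exact ⟨hk.2.1, hk.2.2⟩⟩
    · intro k _; exact csucc_cpred k
    · intro k _; exact cpred_csucc k
  have hQQ : Even (Q'.card + Q.card) := by
    rw [Finset.card_eq_sum_card_fiberwise
        (f := fun k : Fin W.n => W.f k) (t := univ) (fun x _ => Finset.mem_univ _),
      Finset.card_eq_sum_card_fiberwise
        (f := fun k : Fin W.n => W.f (csucc k)) (t := univ) (fun x _ => Finset.mem_univ _),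
      ← Finset.sum_add_distrib]
    rw [even_iff_two_dvd]
    apply Finset.dvd_sum
    intro u _
    rw [← even_iff_two_dvd]
    by_cases huS : u ∈ S
    · have e1 : Q'.filter (fun k => W.f k = u)
          = univ.filter fun k : Fin W.n => W.f k = u ∧ W.f (csucc k) = v := by
        rw [hQ', Finset.filter_filter]
        ext k
        simp only [Finset.mem_filter, Finset.mem_univ, true_and]
        constructor
        · rintro ⟨⟨hsv, -⟩, hku⟩; exact ⟨hku, hsv⟩
        · rintro ⟨hku, hsv⟩; exact ⟨⟨hsv, hku.symm ▸ huS⟩, hku⟩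
      have e2 : Q.filter (fun k => W.f (csucc k) = u)
          = univ.filter fun k : Fin W.n => W.f k = v ∧ W.f (csucc k) = u := by
        rw [hQ, Finset.filter_filter]
        ext k
        simp only [Finset.mem_filter, Finset.mem_univ, true_and]
        constructor
        · rintro ⟨⟨hkv, -⟩, hsu⟩; exact ⟨hkv, hsu⟩
        · rintro ⟨hkv, hsu⟩; exact ⟨⟨hkv, hsu.symm ▸ huS⟩, hsu⟩
      rw [e1, e2]
      by_cases hadj : G.Adj v u
      · rw [add_comm, step_pair_count W hadj]
        decide
      · rw [step_pair_count_zero W hadj]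
        have hnadj' : ¬ G.Adj u v := fun h => hadj h.symm
        have : (univ.filter fun k : Fin W.n => W.f k = u ∧ W.f (csucc k) = v) = ∅ :=
          step_pair_count_zero W hnadj'
        rw [this]
        simp
    · have e1 : Q'.filter (fun k => W.f k = u) = ∅ := by
        ext k
        rw [hQ', Finset.filter_filter]
        simp only [Finset.mem_filter, Finset.mem_univ, true_and, Finset.notMem_empty, iff_false]
        rintro ⟨⟨-, hkS⟩, hku⟩
        exact huS (hku ▸ hkS)
      have e2 : Q.filter (fun k => W.f (csucc k) = u) = ∅ := by
        ext k
        rw [hQ, Finset.filter_filter]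
        simp only [Finset.mem_filter, Finset.mem_univ, true_and, Finset.notMem_empty, iff_false]
        rintro ⟨⟨-, hkS⟩, hku⟩
        exact huS (hku ▸ hkS)
      rw [e1, e2]
      simp
  obtain ⟨c, hc⟩ := hQQ
  exact ⟨c - X.card, by omega⟩

end ParitySection

section SurgerySection
variable {V : Type*} [Fintype V] [DecidableEq V] {G : SimpleGraph V}
/-- reversal of the positions strictly between `i` and `j` -/
def tau {n : ℕ} (i j k : Fin n) : Fin n :=
  if _ : i.val < k.val ∧ k.val < j.val then
    ⟨i.val + j.val - k.val, by have := j.isLt; omega⟩ else k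

/-- corresponding involution on steps -/
def sigma {n : ℕ} (i j k : Fin n) : Fin n :=
  if _ : i.val ≤ k.val ∧ k.val < j.val then
    ⟨i.val + j.val - 1 - k.val, by have := j.isLt; omega⟩ else k

lemma val_tau {n : ℕ} (i j k : Fin n) :
    (tau i j k).val = if i.val < k.val ∧ k.val < j.val then i.val + j.val - k.val else k.val := by
  rw [tau]; split_ifs <;> rfl

lemma val_sigma {n : ℕ} (i j k : Fin n) :
    (sigma i j k).val = if i.val ≤ k.val ∧ k.val < j.val then i.val + j.val - 1 - k.val
      else k.val := by
  rw [sigma]; split_ifs <;> rfl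

section Surgery

variable (W : DoubleTrace G) (i j : Fin W.n)

lemma sigma_sigma (k : Fin W.n) : sigma i j (sigma i j k) = k := by
  have hkn := k.isLt
  apply Fin.ext
  simp only [val_sigma]
  split_ifs <;> first | contradiction | omega

lemma tau_tau (k : Fin W.n) : tau i j (tau i j k) = k := by
  have hkn := k.isLt
  apply Fin.ext
  simp only [val_tau]
  split_ifs <;> first | contradiction | omega

lemma tau_i : tau i j i = i := by
  apply Fin.ext; simp only [val_tau]; split_ifs <;> first | contradiction | omega

lemma tau_j : tau i j j = j := by
  apply Fin.ext; simp only [val_tau]; split_ifs <;> first | contradiction | omega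

variable (hfij : W.f i = W.f j) (hij : i.val + 3 ≤ j.val)

include hfij hij in
lemma step_sigma (k : Fin W.n) :
    s(W.f (tau i j k), W.f (tau i j (csucc k))) =
      s(W.f (sigma i j k), W.f (csucc (sigma i j k))) := by
  have hkn := k.isLt
  have hjn := j.isLt
  by_cases hk : i.val ≤ k.val ∧ k.val < j.val
  · have h1 : W.f (tau i j k) = W.f (csucc (sigma i j k)) := by
      by_cases hki : k.val = i.val
      · have e1 : tau i j k = i := by
          apply Fin.ext; simp only [val_tau]; split_ifs <;> first | contradiction | omega
        have e2 : csucc (sigma i j k) = j := by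
          apply Fin.ext; simp only [val_csucc, val_sigma]
          split_ifs <;> first | contradiction | omega
        rw [e1, e2, hfij]
      · have e : tau i j k = csucc (sigma i j k) := by
          apply Fin.ext; simp only [val_tau, val_csucc, val_sigma]
          split_ifs <;> first | contradiction | omega
        rw [e]
    have h2 : W.f (tau i j (csucc k)) = W.f (sigma i j k) := by
      by_cases hkj : k.val = j.val - 1
      · have e1 : tau i j (csucc k) = j := by
          apply Fin.ext; simp only [val_tau, val_csucc]
          split_ifs <;> first | contradiction | omega
        have e2 : sigma i j k = i := by
          apply Fin.ext; simp only [val_sigma]; split_ifs <;> first | contradiction | omega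
        rw [e1, e2, hfij]
      · have e : tau i j (csucc k) = sigma i j k := by
          apply Fin.ext; simp only [val_tau, val_csucc, val_sigma]
          split_ifs <;> first | contradiction | omega
        rw [e]
    rw [h1, h2, Sym2.eq_swap]
  · have e1 : tau i j k = k := by
      apply Fin.ext; simp only [val_tau]; split_ifs <;> first | contradiction | omega
    have e2 : tau i j (csucc k) = csucc k := by
      apply Fin.ext; simp only [val_tau, val_csucc]
      split_ifs <;> first | contradiction | omega
    have e3 : sigma i j k = k := by
      apply Fin.ext; simp only [val_sigma]; split_ifs <;> first | contradiction | omega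
    rw [e1, e2, e3]

include hfij hij in
lemma pairs (k : Fin W.n) (hki : k ≠ i) (hkj : k ≠ j) :
    (W.f (tau i j (cpred k)) = W.f (cpred (tau i j k)) ∧
      W.f (tau i j (csucc k)) = W.f (csucc (tau i j k))) ∨
    (W.f (tau i j (cpred k)) = W.f (csucc (tau i j k)) ∧
      W.f (tau i j (csucc k)) = W.f (cpred (tau i j k))) := by
  have hkn := k.isLt
  have hjn := j.isLt
  have hki' : k.val ≠ i.val := fun h => hki (Fin.ext h)
  have hkj' : k.val ≠ j.val := fun h => hkj (Fin.ext h)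
  by_cases hin : i.val < k.val ∧ k.val < j.val
  · right
    constructor
    · by_cases h1 : k.val = i.val + 1
      · have e1 : tau i j (cpred k) = i := by
          apply Fin.ext; simp only [val_tau, val_cpred]
          split_ifs <;> first | contradiction | omega
        have e2 : csucc (tau i j k) = j := by
          apply Fin.ext; simp only [val_csucc, val_tau]
          split_ifs <;> first | contradiction | omega
        rw [e1, e2, hfij]
      · have e : tau i j (cpred k) = csucc (tau i j k) := by
          apply Fin.ext; simp only [val_tau, val_cpred, val_csucc]
          split_ifs <;> first | contradiction | omega
        rw [e]
    · by_cases h2 : k.val = j.val - 1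
      · have e1 : tau i j (csucc k) = j := by
          apply Fin.ext; simp only [val_tau, val_csucc]
          split_ifs <;> first | contradiction | omega
        have e2 : cpred (tau i j k) = i := by
          apply Fin.ext; simp only [val_cpred, val_tau]
          split_ifs <;> first | contradiction | omega
        rw [e1, e2, hfij]
      · have e : tau i j (csucc k) = cpred (tau i j k) := by
          apply Fin.ext; simp only [val_tau, val_csucc, val_cpred]
          split_ifs <;> first | contradiction | omega
        rw [e]
  · left
    have e0 : tau i j k = k := by
      apply Fin.ext; simp only [val_tau]; split_ifs <;> first | contradiction | omega
    have e1 : tau i j (cpred k) = cpred k := by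
      apply Fin.ext; simp only [val_tau, val_cpred]
      split_ifs <;> first | contradiction | omega
    have e2 : tau i j (csucc k) = csucc k := by
      apply Fin.ext; simp only [val_tau, val_csucc]
      split_ifs <;> first | contradiction | omega
    rw [e0, e1, e2]
    exact ⟨rfl, rfl⟩

include hfij hij in
lemma pairs_i :
    tau i j (cpred i) = cpred i ∧ tau i j (csucc i) = cpred j ∧
    tau i j (cpred j) = csucc i ∧ tau i j (csucc j) = csucc j := by
  have hjn := j.isLt
  refine ⟨?_, ?_, ?_, ?_⟩ <;>
    (apply Fin.ext; simp only [val_tau, val_cpred, val_csucc];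
     split_ifs <;> first | contradiction | omega)

/-- The reversed double trace. -/
def reversed : DoubleTrace G where
  n := W.n
  f := fun k => W.f (tau i j k)
  adj := by
    intro k
    rw [← SimpleGraph.mem_edgeSet, step_sigma W i j hfij hij k, SimpleGraph.mem_edgeSet]
    exact W.adj (sigma i j k)
  twice := by
    intro e he
    refine Eq.trans ?_ (W.twice e he)
    apply Finset.card_bij' (fun k _ => sigma i j k) (fun k _ => sigma i j k)
    · intro k hk
      simp only [Finset.mem_filter, Finset.mem_univ, true_and] at hk ⊢
      rw [← step_sigma W i j hfij hij k]
      exact hk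
    · intro k hk
      simp only [Finset.mem_filter, Finset.mem_univ, true_and] at hk ⊢
      rw [step_sigma W i j hfij hij (sigma i j k), sigma_sigma]
      exact hk
    · intro k _; exact sigma_sigma W i j k
    · intro k _; exact sigma_sigma W i j k

lemma reversed_f (k : Fin W.n) : (reversed W i j hfij hij).f k = W.f (tau i j k) := rfl

end Surgery

lemma surgery (W : DoubleTrace G) (v : V) (N : Set V) (i j : Fin W.n)
    (hfi : W.f i = v) (hfj : W.f j = v) (hij : i.val + 3 ≤ j.val)
    (hrep : W.HasRepetition v N)
    (ha : W.f (cpred i) ∈ N) (hb : W.f (csucc i) ∈ N)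
    (hc : W.f (cpred j) ∉ N) (hd : W.f (csucc j) ∉ N) :
    ∃ W' : DoubleTrace G, W'.n = W.n ∧
      (∀ (w : V) (N' : Set V), W'.HasRepetition w N' → W.HasRepetition w N') ∧
      ¬ W'.HasRepetition v N := by
  have hfij : W.f i = W.f j := by rw [hfi, hfj]
  obtain ⟨p1, p2, p3, p4⟩ := pairs_i W i j hfij hij
  refine ⟨reversed W i j hfij hij, rfl, ?_, ?_⟩
  · -- transfer of repetitions
    intro w N' h' m hm
    have base : ∀ k : Fin W.n, k ≠ i → k ≠ j → W.f k = w →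
        (W.f (cpred k) ∈ N' ↔ W.f (csucc k) ∈ N') := by
      intro k hki hkj hkw
      have hti : tau i j k ≠ i := fun h => hki (by rw [← tau_tau W i j k, h, tau_i])
      have htj : tau i j k ≠ j := fun h => hkj (by rw [← tau_tau W i j k, h, tau_j])
      have h2 := h' (tau i j k) (by dsimp only [reversed]; rw [tau_tau]; exact hkw)
      dsimp only [reversed] at h2
      rcases pairs W i j hfij hij (tau i j k) hti htj with ⟨e1, e2⟩ | ⟨e1, e2⟩ <;>
        rw [tau_tau] at e1 e2
      · rw [e1, e2] at h2; exact h2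
      · rw [e1, e2] at h2; exact h2.symm
    have hab : v = w → ¬(W.f (cpred i) ∈ N' ↔ W.f (csucc i) ∈ N') → False := by
      intro hvw hcon
      have hA : ∀ k : Fin W.n, k ∈ ({i} : Finset (Fin W.n)) ↔
          (W.f k = v ∧ ¬(W.f (cpred k) ∈ (N ∩ N' : Set V) ↔
            W.f (csucc k) ∈ (N ∩ N' : Set V))) := by
        intro k
        rw [Finset.mem_singleton]
        constructor
        · rintro rfl
          refine ⟨hfi, fun hiff => hcon ?_⟩
          constructor
          · intro h1
            exact ((hiff.mp ⟨ha, h1⟩).2)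
          · intro h1
            exact ((hiff.mpr ⟨hb, h1⟩).2)
        · rintro ⟨hkv, hviol⟩
          by_contra hne
          by_cases hkj : k = j
          · subst hkj
            apply hviol
            constructor
            · rintro ⟨h1, -⟩; exact absurd h1 hc
            · rintro ⟨h1, -⟩; exact absurd h1 hd
          · have h1 := base k hne hkj (hkv.trans hvw)
            have h2 := hrep k hkv
            apply hviol
            constructor
            · rintro ⟨x1, x2⟩; exact ⟨h2.mp x1, h1.mp x2⟩
            · rintro ⟨x1, x2⟩; exact ⟨h2.mpr x1, h1.mpr x2⟩
      have hpar := parity W v (N ∩ N') {i} hA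
      simp at hpar
    by_cases hmi : m = i
    · have hi' : W.f i = w := by rw [← hmi]; exact hm
      have hvw : v = w := hfi.symm.trans hi'
      rw [hmi]
      by_contra hcon
      exact hab hvw hcon
    · by_cases hmj : m = j
      · have hj' : W.f j = w := by rw [← hmj]; exact hm
        have hvw : v = w := hfj.symm.trans hj'
        have hac := h' i (by dsimp only [reversed]; rw [tau_i, hfi]; exact hvw)
        dsimp only [reversed] at hac; rw [p1, p2] at hac
        have hbd := h' j (by dsimp only [reversed]; rw [tau_j]; exact hj')
        dsimp only [reversed] at hbd; rw [p3, p4] at hbd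
        have hab' : W.f (cpred i) ∈ N' ↔ W.f (csucc i) ∈ N' := by
          by_contra hcon
          exact hab hvw hcon
        rw [hmj]
        exact (hac.symm.trans hab').trans hbd
      · exact base m hmi hmj hm
  · -- N is no longer a repetition
    intro h
    have h2 := h i (by dsimp only [reversed]; rw [tau_i]; exact hfi)
    dsimp only [reversed] at h2; rw [p1, p2] at h2
    exact hc (h2.mp ha)


end SurgerySection

section MainSection
variable {V : Type*} [Fintype V] [DecidableEq V] {G : SimpleGraph V}

open scoped Classical in
/-- total number of repetition sets of a double trace -/
noncomputable def repCount (W : DoubleTrace G) : ℕ :=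
  ∑ w : V, ((Finset.univ : Finset V).powerset.filter fun N : Finset V =>
    (↑N : Set V) ⊆ G.neighborSet w ∧ W.HasRepetition w ↑N).card

lemma repCount_lt (W W' : DoubleTrace G) (v : V) (N : Set V)
    (hsub : N ⊆ G.neighborSet v) (hrep : W.HasRepetition v N)
    (htrans : ∀ (w : V) (N' : Set V), W'.HasRepetition w N' → W.HasRepetition w N')
    (hnot : ¬ W'.HasRepetition v N) :
    repCount W' < repCount W := by
  classical
  apply Finset.sum_lt_sum
  · intro w _
    apply Finset.card_le_card
    intro N0 hN0
    simp only [Finset.mem_filter, Finset.mem_powerset] at hN0 ⊢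
    exact ⟨hN0.1, hN0.2.1, htrans w _ hN0.2.2⟩
  · refine ⟨v, Finset.mem_univ v, ?_⟩
    apply Finset.card_lt_card
    constructor
    · intro N0 hN0
      simp only [Finset.mem_filter, Finset.mem_powerset] at hN0 ⊢
      exact ⟨hN0.1, hN0.2.1, htrans v _ hN0.2.2⟩
    · intro hsup
      apply hnot
      have hmem : (Set.toFinite N).toFinset ∈ (Finset.univ : Finset V).powerset.filter
          fun N0 : Finset V => (↑N0 : Set V) ⊆ G.neighborSet v ∧ W.HasRepetition v ↑N0 := by
        simp only [Finset.mem_filter, Finset.mem_powerset]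
        refine ⟨Finset.subset_univ _, ?_, ?_⟩
        · rw [Set.Finite.coe_toFinset]; exact hsub
        · rw [Set.Finite.coe_toFinset]; exact hrep
      have h2 := hsup hmem
      simp only [Finset.mem_filter, Finset.mem_powerset] at h2
      have h3 := h2.2.2
      rwa [Set.Finite.coe_toFinset] at h3

end MainSection

/-- Every finite connected graph with at least one edge admits a
strong trace. -/
theorem exists_strongTrace {V : Type*} [Fintype V] [DecidableEq V]
    (G : SimpleGraph V) (hconn : G.Connected) (hE : G.edgeSet.Nonempty) :
    ∃ W : DoubleTrace G, W.IsStrong := by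
  classical
  obtain ⟨W0⟩ := exists_doubleTrace G hconn
  have hex : ∃ m : ℕ, ∃ W : DoubleTrace G, repCount W = m := ⟨_, W0, rfl⟩
  obtain ⟨W, hWmin⟩ := Nat.find_spec hex
  refine ⟨W, ?_⟩
  intro v N hsub hrep
  by_contra hcon
  push_neg at hcon
  obtain ⟨hne, hnall⟩ := hcon
  obtain ⟨u, hu⟩ := hne
  obtain ⟨u', hu'mem, hu'not⟩ : ∃ x, x ∈ G.neighborSet v ∧ x ∉ N := by
    by_contra hall
    push_neg at hall
    exact hnall (Set.Subset.antisymm hsub hall)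
  have hvnbhd : v ∉ G.neighborSet v := fun h => G.irrefl h
  -- helper: find a visit to v whose predecessor and successor lie in S
  have getv : ∀ (S : Set V), (∀ m, W.f m = v → (W.f (cpred m) ∈ S ↔ W.f (csucc m) ∈ S)) →
      ∀ y ∈ S, G.Adj v y →
      ∃ k, W.f k = v ∧ W.f (cpred k) ∈ S ∧ W.f (csucc k) ∈ S := by
    intro S hS y hy hadj
    have h2 := W.twice s(v,y) hadj
    have hnonempty : (Finset.univ.filter fun k : Fin W.n =>
        s(W.f k, W.f (csucc k)) = s(v,y)).Nonempty := by
      rw [← Finset.card_pos, h2]; norm_num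
    obtain ⟨k, hk⟩ := hnonempty
    simp only [Finset.mem_filter, Finset.mem_univ, true_and, Sym2.eq_iff] at hk
    rcases hk with ⟨h1, h2'⟩ | ⟨h1, h2'⟩
    · have hsucc : W.f (csucc k) ∈ S := h2'.symm ▸ hy
      exact ⟨k, h1, (hS k h1).mpr hsucc, hsucc⟩
    · have hpred : W.f (cpred (csucc k)) ∈ S := by
        rw [cpred_csucc, h1]; exact hy
      exact ⟨csucc k, h2', hpred, (hS _ h2').mp hpred⟩
  obtain ⟨i0, hi0v, hi0p, hi0s⟩ :=
    getv N hrep u hu ((SimpleGraph.mem_neighborSet G v u).mp (hsub hu))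
  set M := G.neighborSet v \ N with hM
  have hrepM : W.HasRepetition v M := by
    intro m hmv
    have hpadj : G.Adj v (W.f (cpred m)) := by
      have := W.adj (cpred m); rw [csucc_cpred, hmv] at this; exact this.symm
    have hsadj : G.Adj v (W.f (csucc m)) := by
      have := W.adj m; rwa [hmv] at this
    have h1 := hrep m hmv
    simp only [hM, Set.mem_diff, SimpleGraph.mem_neighborSet]
    constructor
    · rintro ⟨-, h3⟩; exact ⟨hsadj, fun hx => h3 (h1.mpr hx)⟩
    · rintro ⟨-, h3⟩; exact ⟨hpadj, fun hx => h3 (h1.mp hx)⟩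
  obtain ⟨j0, hj0v, hj0p, hj0s⟩ := getv M hrepM u' ⟨hu'mem, hu'not⟩
    ((SimpleGraph.mem_neighborSet G v u').mp hu'mem)
  have hvN : v ∉ N := fun h => hvnbhd (hsub h)
  have hvM : v ∉ M := fun h => hvnbhd h.1
  have hgap : ∀ a b : Fin W.n, W.f (csucc a) ∈ N → W.f (cpred b) ∈ M → W.f (csucc b) ∈ M →
      W.f b = v → a.val < b.val → a.val + 3 ≤ b.val := by
    intro a b haN hbM hbM' hbv hlt
    have han := a.isLt
    have hbn := b.isLt
    by_contra hno
    by_cases h1 : b.val = a.val + 1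
    · have he : csucc a = b := by
        apply Fin.ext; rw [val_csucc]; split_ifs <;> omega
      rw [he, hbv] at haN
      exact hvN haN
    · have h2 : b.val = a.val + 2 := by omega
      have he : csucc a = cpred b := by
        apply Fin.ext; rw [val_csucc, val_cpred]; split_ifs <;> omega
      rw [he] at haN
      exact hbM.2 haN
  have final : ∀ (W' : DoubleTrace G),
      (∀ (w : V) (N' : Set V), W'.HasRepetition w N' → W.HasRepetition w N') →
      ∀ (S : Set V), S ⊆ G.neighborSet v → W.HasRepetition v S →
      ¬ W'.HasRepetition v S → False := by
    intro W' htrans S hSsub hSrep hSnot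
    have hlt := repCount_lt W W' v S hSsub hSrep htrans hSnot
    rw [hWmin] at hlt
    exact Nat.find_min hex hlt ⟨W', rfl⟩
  rcases Nat.lt_or_ge i0.val j0.val with hlt | hge
  · have hg := hgap i0 j0 hi0s hj0p hj0s hj0v hlt
    obtain ⟨W', -, htrans, hnot⟩ := surgery W v N i0 j0 hi0v hj0v hg hrep hi0p hi0s
      (fun h => hj0p.2 h) (fun h => hj0s.2 h)
    exact final W' htrans N hsub hrep hnot
  · have hlt' : j0.val < i0.val := by
      rcases Nat.lt_or_ge j0.val i0.val with h | h
      · exact h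
      · exfalso
        have : i0 = j0 := Fin.ext (by omega)
        rw [this] at hi0p
        exact hj0p.2 hi0p
    have hgap' : ∀ a b : Fin W.n, W.f (csucc a) ∈ M → W.f (cpred b) ∈ N → W.f (csucc b) ∈ N →
        W.f b = v → a.val < b.val → a.val + 3 ≤ b.val := by
      intro a b haM hbN hbN' hbv hlt2
      have han := a.isLt
      have hbn := b.isLt
      by_contra hno
      by_cases h1 : b.val = a.val + 1
      · have he : csucc a = b := by
          apply Fin.ext; rw [val_csucc]; split_ifs <;> omega
        rw [he, hbv] at haM
        exact hvM haM
      · have h2 : b.val = a.val + 2 := by omega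
        have he : csucc a = cpred b := by
          apply Fin.ext; rw [val_csucc, val_cpred]; split_ifs <;> omega
        rw [he] at haM
        exact haM.2 hbN
    have hg := hgap' j0 i0 hj0s hi0p hi0s hi0v hlt'
    obtain ⟨W', -, htrans, hnot⟩ := surgery W v M j0 i0 hj0v hi0v hg hrepM hj0p hj0s
      (fun h => h.2 hi0p) (fun h => h.2 hi0s)
    exact final W' htrans M Set.diff_subset hrepM hnot


end StrongTraces
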